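/- arXiv:0707.1714 — 3 statements merged into one kernel-verified Lean document; each statement's English description precedes it below -/
import Mathlib

section
/- Let A be an n×m real matrix of rank d, let p ∈ [1,∞), and let q be its dual exponent. Then there exists an (α,β,p)-well-conditioned basis U for the column space of A such that: if p < 2 then α = d^{1/p+1/2} and β = 1; if p = 2 then α = d^{1/2} and β = 1; and if p > 2 then α = d^{1/p+1/2} and β = d^{1/q−1/2}. -/
open scoped BigOperators

/-- The entrywise `p`-norm of a vector: `(∑ i, |v i| ^ p) ^ (1/p)`. -/
noncomputable def pnorm (p : ℝ) {n : ℕ} (v : Fin n → ℝ) : ℝ :=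
  (∑ i, |v i| ^ p) ^ (1 / p)

/-- The dual norm of the `p`-norm: the max-norm if `p = 1`, else the `p/(p-1)`-norm. -/
noncomputable def qnorm (p : ℝ) {n : ℕ} (v : Fin n → ℝ) : ℝ :=
  if p = 1 then ⨆ i, |v i| else pnorm (p / (p - 1)) v

/-- The entrywise `p`-norm of a matrix. -/
noncomputable def mpnorm (p : ℝ) {n d : ℕ} (M : Matrix (Fin n) (Fin d) ℝ) : ℝ :=
  (∑ i, ∑ j, |M i j| ^ p) ^ (1 / p)

/-- `U` is an `(α, β, p)`-well-conditioned basis for the column space of `A`. -/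
def IsWCB (p α β : ℝ) {n m d : ℕ} (A : Matrix (Fin n) (Fin m) ℝ)
    (U : Matrix (Fin n) (Fin d) ℝ) : Prop :=
  LinearMap.range U.mulVecLin = LinearMap.range A.mulVecLin ∧
  mpnorm p U ≤ α ∧
  ∀ z : Fin d → ℝ, qnorm p z ≤ β * pnorm p (U.mulVec z)

/-- `S : Ω → Matrix` is a random `n × n` diagonal sampling matrix with probabilities `pr`:
its diagonal entries are mutually independent, with `S ω i i = (pr i) ^ (-1/p)` with
probability `pr i` and `S ω i i = 0` with probability `1 - pr i`. -/
structure IsSamplingMatrix {Ω : Type} [MeasurableSpace Ω] (μ : MeasureTheory.Measure Ω)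
    (p : ℝ) {n : ℕ} (pr : Fin n → ℝ) (S : Ω → Matrix (Fin n) (Fin n) ℝ) : Prop where
  offdiag : ∀ ω i j, i ≠ j → S ω i j = 0
  meas : ∀ i, Measurable fun ω => S ω i i
  prob_val : ∀ i, μ {ω | S ω i i = (pr i) ^ (-(1 / p))} = ENNReal.ofReal (pr i)
  prob_zero : ∀ i, μ {ω | S ω i i = 0} = ENNReal.ofReal (1 - pr i)
  indep : ProbabilityTheory.iIndepFun (fun i ω => S ω i i) μ


open scoped Matrix

section helpers

variable {p : ℝ} {N : ℕ}

lemma sum_abs_rpow_nonneg (v : Fin N → ℝ) : 0 ≤ ∑ i, |v i| ^ p :=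
  Finset.sum_nonneg fun i _ => Real.rpow_nonneg (abs_nonneg _) _

lemma pnorm_nonneg (p : ℝ) (v : Fin N → ℝ) : 0 ≤ pnorm p v :=
  Real.rpow_nonneg (sum_abs_rpow_nonneg v) _

lemma pnorm_rpow (hp : 0 < p) (v : Fin N → ℝ) : (pnorm p v) ^ p = ∑ i, |v i| ^ p := by
  rw [pnorm, ← Real.rpow_mul (sum_abs_rpow_nonneg v), one_div, inv_mul_cancel₀ hp.ne',
    Real.rpow_one]

lemma pnorm_eq_zero (hp : 0 < p) {v : Fin N → ℝ} (h : pnorm p v = 0) : v = 0 := by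
  have hs : ∑ i, |v i| ^ p = 0 := by
    rw [← pnorm_rpow hp v, h, Real.zero_rpow hp.ne']
  funext i
  have := (Finset.sum_eq_zero_iff_of_nonneg
    (fun i _ => Real.rpow_nonneg (abs_nonneg (v i)) p)).1 hs i (Finset.mem_univ i)
  have h2 : |v i| = 0 := by
    by_contra h3
    exact h3 (by
      have := Real.rpow_natCast (|v i|) 0
      nlinarith [Real.rpow_pos_of_pos (lt_of_le_of_ne (abs_nonneg (v i)) (Ne.symm h3)) p, this])
  simpa using abs_eq_zero.mp h2

lemma pnorm_zero (hp : 0 < p) : pnorm p (0 : Fin N → ℝ) = 0 := by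
  have : ((1:ℝ)/p) ≠ 0 := by positivity
  simp [pnorm, Real.zero_rpow hp.ne']
  exact Real.zero_rpow (by positivity)

lemma abs_le_pnorm (hp : 0 < p) (v : Fin N → ℝ) (i : Fin N) : |v i| ≤ pnorm p v := by
  have h1 : |v i| ^ p ≤ ∑ j, |v j| ^ p :=
    Finset.single_le_sum (fun j _ => Real.rpow_nonneg (abs_nonneg _) p) (Finset.mem_univ i)
  calc |v i| = (|v i| ^ p) ^ (1 / p) := by
        rw [← Real.rpow_mul (abs_nonneg _), mul_one_div, div_self hp.ne', Real.rpow_one]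
    _ ≤ pnorm p v :=
        Real.rpow_le_rpow (Real.rpow_nonneg (abs_nonneg _) _) h1 (by positivity)

lemma pnorm_smul (hp : 0 < p) (c : ℝ) (v : Fin N → ℝ) :
    pnorm p (c • v) = |c| * pnorm p v := by
  unfold pnorm
  have h : ∀ i : Fin N, |(c • v) i| ^ p = |c| ^ p * |v i| ^ p := fun i => by
    simp [abs_mul, Real.mul_rpow (abs_nonneg c) (abs_nonneg (v i))]
  rw [Finset.sum_congr rfl fun i _ => h i, ← Finset.mul_sum,
    Real.mul_rpow (Real.rpow_nonneg (abs_nonneg c) p) (sum_abs_rpow_nonneg v),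
    one_div, Real.rpow_rpow_inv (abs_nonneg c) hp.ne']

lemma pnorm_pos (hp : 0 < p) {v : Fin N → ℝ} (hv : v ≠ 0) : 0 < pnorm p v :=
  lt_of_le_of_ne (pnorm_nonneg p v) (fun h => hv (pnorm_eq_zero hp h.symm))

lemma qnorm_le_of_bound (hp : 1 ≤ p) {d : ℕ} (hd : 0 < d) {z : Fin d → ℝ} {M : ℝ}
    (hM : ∀ j, |z j| ≤ M) : qnorm p z ≤ (d : ℝ) ^ (1 - 1/p) * M := by
  have hM0 : 0 ≤ M := le_trans (abs_nonneg _) (hM ⟨0, hd⟩)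
  by_cases h1 : p = 1
  · subst h1
    haveI : Nonempty (Fin d) := ⟨⟨0, hd⟩⟩
    simp only [qnorm, if_pos rfl]
    have h0 : (1:ℝ) - 1/1 = 0 := by norm_num
    rw [h0, Real.rpow_zero, one_mul]
    exact ciSup_le hM
  · have hp1 : 1 < p := lt_of_le_of_ne hp (Ne.symm h1)
    have hq0 : 0 < p / (p - 1) := by
      apply div_pos (by linarith) (by linarith)
    rw [qnorm, if_neg h1]
    set q := p / (p - 1) with hq
    have hsum : ∑ i, |z i| ^ q ≤ (d : ℝ) * M ^ q := by
      calc ∑ i, |z i| ^ q ≤ ∑ _i : Fin d, M ^ q :=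
            Finset.sum_le_sum fun i _ =>
              Real.rpow_le_rpow (abs_nonneg _) (hM i) hq0.le
        _ = (d : ℝ) * M ^ q := by simp [mul_comm]
    have : pnorm q z ≤ ((d : ℝ) * M ^ q) ^ (1/q) :=
      Real.rpow_le_rpow (sum_abs_rpow_nonneg z) hsum (by positivity)
    refine this.trans (le_of_eq ?_)
    rw [Real.mul_rpow (by positivity) (Real.rpow_nonneg hM0 q), one_div,
      Real.rpow_rpow_inv hM0 hq0.ne']
    congr 2
    rw [hq]
    field_simp
end helpers


lemma auerbach {n d : ℕ} {p : ℝ} (hp : 1 ≤ p) (F : Matrix (Fin n) (Fin d) ℝ)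
    (hF : Function.Injective F.mulVec) :
    ∃ C : Matrix (Fin d) (Fin d) ℝ, IsUnit C.det ∧
      (∀ j, pnorm p (fun i => (F * C) i j) = 1) ∧
      (∀ (z : Fin d → ℝ) (j : Fin d), |z j| ≤ pnorm p ((F * C).mulVec z)) := by
  have hp0 : 0 < p := lt_of_lt_of_le one_pos hp
  set Nf : (Fin d → ℝ) → ℝ := fun x => pnorm p (F.mulVec x) with hNf
  have hNsmul : ∀ (c : ℝ) (x : Fin d → ℝ), Nf (c • x) = |c| * Nf x := fun c x => by
    rw [hNf]; simp only
    rw [Matrix.mulVec_smul, pnorm_smul hp0]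
  -- continuity
  have hpn_cont : Continuous fun y : Fin n → ℝ => pnorm p y := by
    unfold pnorm
    apply Continuous.rpow_const
    · exact continuous_finset_sum _ fun i _ =>
        ((continuous_apply i).abs.rpow_const (fun x => Or.inr hp0.le))
    · exact fun x => Or.inr (by positivity)
  have hmv_eq : (fun x : Fin d → ℝ => F.mulVec x) = ⇑F.mulVecLin := by
    funext x; simp [Matrix.mulVecLin_apply]
  have hmv_cont : Continuous fun x : Fin d → ℝ => F.mulVec x := by
    rw [hmv_eq]; exact LinearMap.continuous_of_finiteDimensional _
  have hN_cont : Continuous Nf := hpn_cont.comp hmv_cont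
  -- the constraint set
  set S : Set (Fin d → Fin d → ℝ) := {g | ∀ j, Nf (g j) = 1} with hS
  have hSclosed : IsClosed S := by
    have : S = ⋂ j, {g : Fin d → Fin d → ℝ | Nf (g j) = 1} := by
      ext g; simp [hS, Set.mem_iInter]
    rw [this]
    exact isClosed_iInter fun j =>
      isClosed_eq (hN_cont.comp (continuous_apply j)) continuous_const
  -- antilipschitz bound
  have hFinj : Function.Injective F.mulVecLin := by
    rw [← hmv_eq]; exact hF
  obtain ⟨K, hK0, hKb⟩ : ∃ K : ℝ, 0 ≤ K ∧ ∀ x : Fin d → ℝ, ‖x‖ ≤ K * Nf x := by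
    set e := LinearEquiv.ofInjective F.mulVecLin hFinj with he
    set e' := LinearMap.toContinuousLinearMap (e.symm.toLinearMap) with he'
    refine ⟨‖e'‖, ContinuousLinearMap.opNorm_nonneg _, fun x => ?_⟩
    calc ‖x‖ = ‖e' (e x)‖ := by simp [he', he]
      _ ≤ ‖e'‖ * ‖e x‖ := e'.le_opNorm _
      _ ≤ ‖e'‖ * Nf x := by
          refine mul_le_mul_of_nonneg_left ?_ (ContinuousLinearMap.opNorm_nonneg _)
          have hcoe : ((e x : LinearMap.range F.mulVecLin) : Fin n → ℝ) = F.mulVec x := by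
            rw [he]; simp [LinearEquiv.ofInjective_apply]
          have : ‖e x‖ = ‖((e x : LinearMap.range F.mulVecLin) : Fin n → ℝ)‖ := rfl
          rw [this, hcoe]
          exact (pi_norm_le_iff_of_nonneg (pnorm_nonneg p _)).2 fun i => by
            simpa [Real.norm_eq_abs] using abs_le_pnorm hp0 (F.mulVec x) i
  have hSsub : S ⊆ Metric.closedBall 0 K := fun g hg => by
    rw [Metric.mem_closedBall, dist_zero_right]
    refine (pi_norm_le_iff_of_nonneg hK0).2 fun j => ?_
    calc ‖g j‖ ≤ K * Nf (g j) := hKb (g j)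
      _ = K := by rw [hg j, mul_one]
  have hScompact : IsCompact S :=
    (isCompact_closedBall (0 : Fin d → Fin d → ℝ) K).of_isClosed_subset hSclosed hSsub
  -- nonemptiness
  set sing : Fin d → Fin d → ℝ := fun j => Pi.single j 1 with hsing
  have hNpos : ∀ j : Fin d, 0 < Nf (sing j) := fun j => by
    apply pnorm_pos hp0
    intro h0
    have h1 : sing j = 0 := hF (by rw [h0, Matrix.mulVec_zero])
    simpa [hsing] using congr_fun h1 j
  set g₀ : Fin d → Fin d → ℝ := fun j => (Nf (sing j))⁻¹ • sing j with hg₀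
  have hg₀S : g₀ ∈ S := fun j => by
    rw [hg₀]; simp only
    rw [hNsmul, abs_of_pos (inv_pos.2 (hNpos j)), inv_mul_cancel₀ (hNpos j).ne']
  -- maximizer of |det|
  have hDcont : Continuous fun g : Fin d → Fin d → ℝ => |(Matrix.of g).det| := by
    apply Continuous.abs
    apply Continuous.matrix_det
    exact continuous_pi fun i => continuous_pi fun j =>
      (continuous_apply j).comp (continuous_apply i)
  obtain ⟨g, hgS, hgmax⟩ := hScompact.exists_isMaxOn ⟨g₀, hg₀S⟩ hDcont.continuousOn
  have hg₀det : 0 < |(Matrix.of g₀).det| := by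
    have hdiag : Matrix.of g₀ = Matrix.diagonal (fun j => (Nf (sing j))⁻¹) := by
      ext a b
      by_cases h : a = b
      · subst h; simp [hg₀, hsing, Matrix.diagonal, Pi.single_apply]
      · simp [hg₀, hsing, Matrix.diagonal, Pi.single_apply, h]
    rw [hdiag, Matrix.det_diagonal, abs_pos]
    exact Finset.prod_ne_zero_iff.2 fun j _ => inv_ne_zero (hNpos j).ne'
  have hgdetpos : 0 < |(Matrix.of g).det| := lt_of_lt_of_le hg₀det (hgmax hg₀S)
  have hdet : IsUnit ((Matrix.of g)ᵀ).det := by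
    rw [Matrix.det_transpose, isUnit_iff_ne_zero]
    exact fun h => by simp [h] at hgdetpos
  refine ⟨(Matrix.of g)ᵀ, hdet, ?_, ?_⟩
  · -- unit columns
    intro j
    have hcol : (fun i => (F * (Matrix.of g)ᵀ) i j) = F.mulVec (g j) := by
      funext i
      simp [Matrix.mul_apply, Matrix.mulVec, dotProduct, Matrix.transpose_apply]
    rw [hcol]
    exact hgS j
  · -- Auerbach property
    intro z j
    have hWz : (F * (Matrix.of g)ᵀ).mulVec z = F.mulVec (Matrix.vecMul z (Matrix.of g)) := by
      rw [← Matrix.mulVec_mulVec, Matrix.mulVec_transpose]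
    set t := pnorm p ((F * (Matrix.of g)ᵀ).mulVec z) with ht
    have ht0 : 0 ≤ t := pnorm_nonneg p _
    rcases eq_or_lt_of_le ht0 with h0 | hpos
    · -- degenerate: t = 0 forces z = 0
      have hWz0 : (F * (Matrix.of g)ᵀ).mulVec z = 0 := pnorm_eq_zero hp0 h0.symm
      have hCz : (Matrix.of g)ᵀ.mulVec z = 0 := by
        apply hF
        rw [Matrix.mulVec_mulVec, hWz0, Matrix.mulVec_zero]
      have hz : z = 0 := by
        calc z = (((Matrix.of g)ᵀ)⁻¹ * (Matrix.of g)ᵀ) *ᵥ z := by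
              rw [Matrix.nonsing_inv_mul _ hdet, Matrix.one_mulVec]
          _ = ((Matrix.of g)ᵀ)⁻¹ *ᵥ ((Matrix.of g)ᵀ *ᵥ z) :=
              (Matrix.mulVec_mulVec _ _ _).symm
          _ = 0 := by rw [hCz, Matrix.mulVec_zero]
      rw [hz, ← h0]; simp
    · -- main case
      by_contra hcon
      push_neg at hcon
      have hvm : Matrix.vecMul z (Matrix.of g) = ∑ k, z k • g k := by
        funext b
        simp [Matrix.vecMul, dotProduct, Finset.sum_apply]
      set g' := Function.update g j (t⁻¹ • Matrix.vecMul z (Matrix.of g)) with hg'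
      have hg'S : g' ∈ S := by
        intro k
        by_cases hk : k = j
        · subst hk
          rw [hg', Function.update_self, hNsmul]
          have hNt : Nf (Matrix.vecMul z (Matrix.of g)) = t := by
            rw [hNf]; simp only
            rw [← hWz]
          rw [hNt, abs_of_pos (inv_pos.2 hpos), inv_mul_cancel₀ hpos.ne']
        · rw [hg', Function.update_of_ne hk]; exact hgS k
      have hDle : |(Matrix.of g').det| ≤ |(Matrix.of g).det| := hgmax hg'S
      have hof : Matrix.of g' = (Matrix.of g).updateRow j (∑ k, (t⁻¹ * z k) • (Matrix.of g) k) := by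
        rw [hg']
        ext a b
        by_cases ha : a = j
        · subst ha
          simp [Matrix.updateRow_apply, Function.update_self, hvm, Finset.smul_sum, smul_smul]
        · simp [Matrix.updateRow_apply, Function.update_of_ne ha, ha]
      have hDg' : (Matrix.of g').det = (t⁻¹ * z j) * (Matrix.of g).det := by
        rw [hof, Matrix.det_updateRow_sum]
        simp
      have habs : |(Matrix.of g').det| = (t⁻¹ * |z j|) * |(Matrix.of g).det| := by
        rw [hDg', abs_mul, abs_mul, abs_of_pos (inv_pos.2 hpos)]
      have h1 : 1 < t⁻¹ * |z j| := by
        calc (1:ℝ) = t⁻¹ * t := (inv_mul_cancel₀ hpos.ne').symm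
          _ < t⁻¹ * |z j| := by
              exact mul_lt_mul_of_pos_left hcon (inv_pos.2 hpos)
      nlinarith [hDle, habs, h1, hgdetpos]


lemma exists_basis_matrix {n m d : ℕ} (A : Matrix (Fin n) (Fin m) ℝ) (hrank : A.rank = d) :
    ∃ F : Matrix (Fin n) (Fin d) ℝ, Function.Injective F.mulVec ∧
      LinearMap.range F.mulVecLin = LinearMap.range A.mulVecLin := by
  have hr : Module.finrank ℝ ↥(LinearMap.range A.mulVecLin) = d := hrank
  set V := LinearMap.range A.mulVecLin with hV
  let b : Module.Basis (Fin d) ℝ V := Module.finBasisOfFinrankEq ℝ V hr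
  set F : Matrix (Fin n) (Fin d) ℝ := Matrix.of (fun i j => (b j : Fin n → ℝ) i) with hF
  have key : ∀ v : Fin d → ℝ, F *ᵥ v = ((b.equivFun.symm v : V) : Fin n → ℝ) := by
    intro v
    rw [Module.Basis.equivFun_symm_apply]
    funext i
    rw [hF]
    simp [Matrix.mulVec, dotProduct, Finset.sum_apply, mul_comm]
  refine ⟨F, ?_, ?_⟩
  · intro x y hxy
    rw [key, key] at hxy
    exact b.equivFun.symm.injective (Subtype.coe_injective hxy)
  · apply le_antisymm
    · rintro _ ⟨v, rfl⟩
      rw [Matrix.mulVecLin_apply, key]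
      exact (b.equivFun.symm v).2
    · rintro y hy
      exact ⟨b.equivFun ⟨y, hy⟩,
        by rw [Matrix.mulVecLin_apply, key, LinearEquiv.symm_apply_apply]⟩

lemma range_mul_right {n d : ℕ} (F : Matrix (Fin n) (Fin d) ℝ) {M : Matrix (Fin d) (Fin d) ℝ}
    (hM : IsUnit M.det) :
    LinearMap.range (F * M).mulVecLin = LinearMap.range F.mulVecLin := by
  rw [Matrix.mulVecLin_mul]
  apply LinearMap.range_comp_of_range_eq_top
  rw [LinearMap.range_eq_top]
  intro y
  exact ⟨M⁻¹ *ᵥ y, by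
    rw [Matrix.mulVecLin_apply, Matrix.mulVec_mulVec, Matrix.mul_nonsing_inv _ hM,
      Matrix.one_mulVec]⟩

lemma mpnorm_unit_cols {n d : ℕ} {p : ℝ} (hp : 0 < p) {W : Matrix (Fin n) (Fin d) ℝ}
    (h : ∀ j, pnorm p (fun i => W i j) = 1) : mpnorm p W = (d : ℝ) ^ (1/p : ℝ) := by
  unfold mpnorm
  have hsum : ∑ i, ∑ j, |W i j| ^ p = (d : ℝ) := by
    rw [Finset.sum_comm]
    have h1 : ∀ j : Fin d, ∑ i, |W i j| ^ p = 1 := fun j => by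
      have h2 := pnorm_rpow hp (fun i => W i j)
      rw [h j, Real.one_rpow] at h2
      exact h2.symm
    rw [Finset.sum_congr rfl fun j _ => h1 j]
    simp
  rw [hsum]

lemma mpnorm_smul {n d : ℕ} {p : ℝ} (hp : 0 < p) (c : ℝ) (W : Matrix (Fin n) (Fin d) ℝ) :
    mpnorm p (c • W) = |c| * mpnorm p W := by
  unfold mpnorm
  have h : ∀ (i : Fin n) (j : Fin d), |(c • W) i j| ^ p = |c| ^ p * |W i j| ^ p := fun i j => by
    simp only [Matrix.smul_apply, smul_eq_mul, abs_mul]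
    rw [Real.mul_rpow (abs_nonneg c) (abs_nonneg (W i j))]
  have hsum : ∑ i, ∑ j, |(c • W) i j| ^ p = |c| ^ p * ∑ i, ∑ j, |W i j| ^ p := by
    rw [Finset.mul_sum]
    refine Finset.sum_congr rfl fun i _ => ?_
    rw [Finset.mul_sum]
    exact Finset.sum_congr rfl fun j _ => h i j
  have hnn : 0 ≤ ∑ i : Fin n, ∑ j : Fin d, |W i j| ^ p :=
    Finset.sum_nonneg fun i _ => Finset.sum_nonneg fun j _ =>
      Real.rpow_nonneg (abs_nonneg _) _
  rw [hsum, Real.mul_rpow (Real.rpow_nonneg (abs_nonneg c) p) hnn, one_div,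
    Real.rpow_rpow_inv (abs_nonneg c) hp.ne']

lemma wcb_scaled {n m d : ℕ} {p : ℝ} (hp : 1 ≤ p) (hd : 0 < d) (s : ℝ)
    (A : Matrix (Fin n) (Fin m) ℝ) (F : Matrix (Fin n) (Fin d) ℝ)
    (hFinj : Function.Injective F.mulVec)
    (hFrange : LinearMap.range F.mulVecLin = LinearMap.range A.mulVecLin) :
    ∃ U : Matrix (Fin n) (Fin d) ℝ,
      IsWCB p ((d:ℝ) ^ (s + 1/p)) ((d:ℝ) ^ ((1 - 1/p) - s)) A U := by
  have hp0 : 0 < p := lt_of_lt_of_le one_pos hp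
  have hdpos : (0:ℝ) < d := by exact_mod_cast hd
  obtain ⟨C, hC, hcols, hbound⟩ := auerbach hp F hFinj
  set c : ℝ := (d:ℝ) ^ s with hc
  have hcpos : 0 < c := Real.rpow_pos_of_pos hdpos s
  refine ⟨c • (F * C), ?_, ?_, ?_⟩
  · have h1 : c • (F * C) = F * (c • C) := by rw [Matrix.mul_smul]
    rw [h1, range_mul_right F ?_, hFrange]
    rw [Matrix.det_smul]
    exact (isUnit_iff_ne_zero.2 (pow_ne_zero _ hcpos.ne')).mul hC
  · rw [mpnorm_smul hp0, abs_of_pos hcpos, mpnorm_unit_cols hp0 hcols, hc,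
      ← Real.rpow_add hdpos]
  · intro z
    have h1 : qnorm p z ≤ (d:ℝ) ^ (1 - 1/p) * pnorm p ((F * C) *ᵥ z) :=
      qnorm_le_of_bound hp hd (fun j => hbound z j)
    have h2 : pnorm p ((c • (F * C)) *ᵥ z) = c * pnorm p ((F * C) *ᵥ z) := by
      rw [Matrix.smul_mulVec, pnorm_smul hp0, abs_of_pos hcpos]
    rw [h2, ← mul_assoc, hc, ← Real.rpow_add hdpos, sub_add_cancel]
    exact h1

lemma wcb_mono {p α α' β β' : ℝ} {n m d : ℕ} {A : Matrix (Fin n) (Fin m) ℝ}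
    {U : Matrix (Fin n) (Fin d) ℝ} (h : IsWCB p α β A U) (hα : α ≤ α') (hβ : β ≤ β') :
    IsWCB p α' β' A U :=
  ⟨h.1, h.2.1.trans hα, fun z =>
    (h.2.2 z).trans (mul_le_mul_of_nonneg_right hβ (pnorm_nonneg p _))⟩


open scoped MatrixOrder in
lemma wcb_two {n m d : ℕ} (A : Matrix (Fin n) (Fin m) ℝ) (F : Matrix (Fin n) (Fin d) ℝ)
    (hFinj : Function.Injective F.mulVec)
    (hFrange : LinearMap.range F.mulVecLin = LinearMap.range A.mulVecLin) :
    ∃ U : Matrix (Fin n) (Fin d) ℝ, IsWCB 2 ((d:ℝ) ^ ((1:ℝ)/2)) 1 A U := by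
  have hG : (Fᵀ * F).PosDef := by
    refine Matrix.PosDef.of_dotProduct_mulVec_pos ?_ ?_
    · rw [Matrix.IsHermitian, Matrix.conjTranspose_eq_transpose_of_trivial,
        Matrix.transpose_mul, Matrix.transpose_transpose]
    · intro x hx
      have hy : F *ᵥ x ≠ 0 := fun h => hx (hFinj (h.trans (Matrix.mulVec_zero F).symm))
      have hdot : dotProduct (star x) ((Fᵀ * F) *ᵥ x)
          = dotProduct (F *ᵥ x) (F *ᵥ x) := by
        rw [star_trivial, ← Matrix.mulVec_mulVec, Matrix.dotProduct_mulVec,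
          Matrix.vecMul_transpose]
      rw [hdot]
      obtain ⟨i, hi⟩ := Function.ne_iff.1 hy
      unfold dotProduct
      exact Finset.sum_pos' (fun k _ => mul_self_nonneg _)
        ⟨i, Finset.mem_univ i, mul_self_pos.2 (by simpa using hi)⟩
  set S := CFC.sqrt (Fᵀ * F) with hSdef
  have hSS : S * S = Fᵀ * F := CFC.sqrt_mul_sqrt_self _ hG.posSemidef.nonneg
  have hSym : Sᵀ = S := by
    have h1 : S.IsHermitian := by
      have h0 := (CFC.sqrt_nonneg (Fᵀ * F)).1; rwa [sub_zero] at h0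
    rwa [Matrix.IsHermitian, Matrix.conjTranspose_eq_transpose_of_trivial] at h1
  have hdetS : IsUnit S.det := by
    rw [isUnit_iff_ne_zero]
    intro h0
    have hdG : 0 < (Fᵀ * F).det := hG.det_pos
    rw [← hSS, Matrix.det_mul, h0, mul_zero] at hdG
    exact lt_irrefl _ hdG
  set U := F * S⁻¹ with hU
  have hUtU : Uᵀ * U = 1 := by
    rw [hU, Matrix.transpose_mul, Matrix.transpose_nonsing_inv, hSym,
      Matrix.mul_assoc, ← Matrix.mul_assoc Fᵀ F, ← hSS, Matrix.mul_assoc S S,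
      Matrix.mul_nonsing_inv _ hdetS, Matrix.mul_one, Matrix.nonsing_inv_mul _ hdetS]
  have hone : ∀ j k, ∑ i, U i j * U i k = (1 : Matrix (Fin d) (Fin d) ℝ) j k := by
    intro j k
    have h1 := congr_fun (congr_fun hUtU j) k
    rw [Matrix.mul_apply] at h1
    simpa [Matrix.transpose_apply] using h1
  have hsq : ∀ x : ℝ, |x| ^ (2:ℝ) = x * x := fun x => by
    rw [show (2:ℝ) = ((2:ℕ):ℝ) by norm_num, Real.rpow_natCast, sq_abs, sq]
  refine ⟨U, ?_, ?_, ?_⟩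
  · rw [hU, range_mul_right F (Matrix.isUnit_nonsing_inv_det _ hdetS), hFrange]
  · unfold mpnorm
    have hsum : ∑ i, ∑ j, |U i j| ^ (2:ℝ) = (d:ℝ) := by
      rw [Finset.sum_comm]
      have h1 : ∀ j : Fin d, ∑ i, |U i j| ^ (2:ℝ) = 1 := fun j => by
        rw [Finset.sum_congr rfl fun i _ => hsq (U i j), hone j j, Matrix.one_apply_eq]
      rw [Finset.sum_congr rfl fun j _ => h1 j]
      simp
    rw [hsum]
  · intro z
    have hq : qnorm 2 z = pnorm 2 z := by
      rw [qnorm, if_neg (by norm_num : (2:ℝ) ≠ 1)]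
      norm_num
    have hdp : ∀ (N : ℕ) (v : Fin N → ℝ), ∑ i, |v i| ^ (2:ℝ) = dotProduct v v :=
      fun N v => Finset.sum_congr rfl fun i _ => hsq (v i)
    have hpn : pnorm 2 (U *ᵥ z) = pnorm 2 z := by
      unfold pnorm
      rw [hdp, hdp, Matrix.dotProduct_mulVec, Matrix.vecMul_mulVec, hUtU, Matrix.vecMul_one]
    rw [hq, hpn, one_mul]

/-- **Existence of well-conditioned bases.** -/
theorem well_conditioned_basis_exists {n m d : ℕ} (A : Matrix (Fin n) (Fin m) ℝ) (p : ℝ)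
    (hp : 1 ≤ p) (hrank : A.rank = d) :
    ∃ U : Matrix (Fin n) (Fin d) ℝ,
      (p < 2 → IsWCB p ((d : ℝ) ^ (1 / p + 1 / 2)) 1 A U) ∧
      (p = 2 → IsWCB p ((d : ℝ) ^ ((1 : ℝ) / 2)) 1 A U) ∧
      (2 < p → IsWCB p ((d : ℝ) ^ (1 / p + 1 / 2)) ((d : ℝ) ^ ((1 - 1 / p) - 1 / 2)) A U) := by
  have hp0 : 0 < p := lt_of_lt_of_le one_pos hp
  rcases Nat.eq_zero_or_pos d with hd0 | hd
  · subst hd0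
    set U0 : Matrix (Fin n) (Fin 0) ℝ := Matrix.of fun _ _ => (0:ℝ) with hU0def
    have hU0 : ∀ z : Fin 0 → ℝ, U0 *ᵥ z = 0 := fun z => by
      funext i; simp [hU0def, Matrix.mulVec, dotProduct]
    have hrange : LinearMap.range U0.mulVecLin = LinearMap.range A.mulVecLin := by
      have h1 : LinearMap.range A.mulVecLin = ⊥ := Submodule.finrank_eq_zero.1 hrank
      rw [h1, LinearMap.range_eq_bot]
      exact LinearMap.ext fun z => by rw [Matrix.mulVecLin_apply, hU0]; rfl
    have hwcb : ∀ α β : ℝ, 0 ≤ α → IsWCB p α β A U0 := by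
      intro α β hα
      refine ⟨hrange, ?_, ?_⟩
      · unfold mpnorm
        rw [show (∑ i : Fin n, ∑ j : Fin 0, |U0 i j| ^ p) = 0 by simp]
        rw [Real.zero_rpow (by positivity : (1:ℝ)/p ≠ 0)]
        exact hα
      · intro z
        have hz : z = 0 := Subsingleton.elim z 0
        have hqz : qnorm p z = 0 := by
          rw [qnorm]
          split
          · exact Real.iSup_of_isEmpty _
          · rename_i h1
            have hq0 : 0 < p / (p - 1) := by
              have : 1 < p := lt_of_le_of_ne hp (Ne.symm h1)
              exact div_pos hp0 (by linarith)
            rw [hz, pnorm_zero hq0]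
        have hpz : pnorm p (U0 *ᵥ z) = 0 := by rw [hU0, pnorm_zero hp0]
        rw [hqz, hpz, mul_zero]
    exact ⟨U0,
      fun _ => hwcb _ _ (Real.rpow_nonneg (by norm_num) _),
      fun _ => hwcb _ _ (Real.rpow_nonneg (by norm_num) _),
      fun _ => hwcb _ _ (Real.rpow_nonneg (by norm_num) _)⟩
  · obtain ⟨F, hFinj, hFrange⟩ := exists_basis_matrix A hrank
    have hd1 : (1:ℝ) ≤ d := by exact_mod_cast hd
    by_cases hp2 : p = 2
    · subst hp2
      obtain ⟨U, hU⟩ := wcb_two A F hFinj hFrange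
      exact ⟨U, fun h => absurd h (lt_irrefl 2), fun _ => hU,
        fun h => absurd h (lt_irrefl 2)⟩
    · rcases lt_or_gt_of_ne hp2 with hplt | hpgt
      · obtain ⟨U, hU⟩ := wcb_scaled hp hd (1 - 1/p) A F hFinj hFrange
        refine ⟨U, fun _ => ?_, fun h => absurd h (by linarith),
          fun h => absurd h (by linarith)⟩
        have hα : (d:ℝ) ^ ((1 - 1/p) + 1/p) ≤ (d:ℝ) ^ (1/p + 1/2) := by
          rw [sub_add_cancel]
          apply Real.rpow_le_rpow_of_exponent_le hd1
          have h2 : (1:ℝ)/2 ≤ 1/p := by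
            rw [div_le_div_iff₀ (by norm_num) hp0]
            linarith
          linarith
        have hβ : (d:ℝ) ^ ((1 - 1/p) - (1 - 1/p)) = 1 := by rw [sub_self, Real.rpow_zero]
        exact wcb_mono hU hα (le_of_eq hβ)
      · obtain ⟨U, hU⟩ := wcb_scaled hp hd ((1:ℝ)/2) A F hFinj hFrange
        refine ⟨U, fun h => absurd h (by linarith), fun h => absurd h (by linarith),
          fun _ => ?_⟩
        have hα : ((1:ℝ)/2 + 1/p) = (1/p + 1/2) := by ring
        exact wcb_mono hU (le_of_eq (by rw [hα])) (le_refl _)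
end

section
/- Let Q be an n×d real matrix of full column rank d and let p ∈ [1,∞). Then there exists an invertible d×d real matrix G such that, setting U = QG^{−1}, for all z ∈ ℝ^d one has ‖z‖_2 ≤ ‖Uz‖_p ≤ √d·‖z‖_2. -/
open scoped BigOperators

open Matrix

section Aux

variable {n d : ℕ}

private lemma pn_nonneg (p : ℝ) (v : Fin n → ℝ) : 0 ≤ pnorm p v :=
  Real.rpow_nonneg (Finset.sum_nonneg fun i _ => Real.rpow_nonneg (abs_nonneg _) _) _

private lemma pn_zero {p : ℝ} (hp : 1 ≤ p) : pnorm p (0 : Fin n → ℝ) = 0 := by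
  have hp0 : p ≠ 0 := by positivity
  simp [pnorm, Real.zero_rpow hp0, one_div, Real.zero_rpow (inv_ne_zero hp0)]

private lemma pn_pos {p : ℝ} (hp : 1 ≤ p) {v : Fin n → ℝ} (hv : v ≠ 0) : 0 < pnorm p v := by
  obtain ⟨i, hi⟩ := Function.ne_iff.mp hv
  have hsum : 0 < ∑ j, |v j| ^ p := by
    have h1 : |v i| ^ p ≤ ∑ j, |v j| ^ p :=
      Finset.single_le_sum (fun j _ => Real.rpow_nonneg (abs_nonneg _) _) (Finset.mem_univ i)
    have h2 : 0 < |v i| ^ p := Real.rpow_pos_of_pos (abs_pos.mpr (by simpa using hi)) _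
    linarith
  exact Real.rpow_pos_of_pos hsum _

private lemma pn_smul {p : ℝ} (hp : 1 ≤ p) (c : ℝ) (v : Fin n → ℝ) :
    pnorm p (c • v) = |c| * pnorm p v := by
  have hp0 : p ≠ 0 := by positivity
  have h1 : ∀ i, |(c • v) i| ^ p = |c| ^ p * |v i| ^ p := by
    intro i
    rw [Pi.smul_apply, smul_eq_mul, abs_mul, Real.mul_rpow (abs_nonneg _) (abs_nonneg _)]
  unfold pnorm
  rw [Finset.sum_congr rfl fun i _ => h1 i, ← Finset.mul_sum,
    Real.mul_rpow (Real.rpow_nonneg (abs_nonneg _) _)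
      (Finset.sum_nonneg fun i _ => Real.rpow_nonneg (abs_nonneg _) _),
    ← Real.rpow_mul (abs_nonneg _), mul_one_div_cancel hp0, Real.rpow_one]

private lemma pn_add {p : ℝ} (hp : 1 ≤ p) (v w : Fin n → ℝ) :
    pnorm p (v + w) ≤ pnorm p v + pnorm p w := by
  simpa [pnorm] using Real.Lp_add_le Finset.univ v w hp

private lemma pn_two (v : Fin n → ℝ) : pnorm 2 v = Real.sqrt (v ⬝ᵥ v) := by
  have h1 : ∀ i, |v i| ^ (2:ℝ) = v i * v i := by
    intro i
    rw [Real.rpow_two, sq_abs, sq]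
  rw [Real.sqrt_eq_rpow]
  unfold pnorm
  rw [Finset.sum_congr rfl fun i _ => h1 i]
  rfl

private lemma pn_cont {p : ℝ} (hp : 1 ≤ p) : Continuous fun v : Fin n → ℝ => pnorm p v := by
  have h0 : (0:ℝ) ≤ p := by linarith
  exact (Real.continuous_rpow_const (by positivity)).comp
    (continuous_finset_sum _ fun i _ =>
      (Real.continuous_rpow_const h0).comp ((continuous_apply i).abs))

private lemma abs_le_pn_two (v : Fin n → ℝ) (i : Fin n) : |v i| ≤ pnorm 2 v := by
  rw [pn_two, ← Real.sqrt_mul_self_eq_abs]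
  apply Real.sqrt_le_sqrt
  have : ∀ j, (0:ℝ) ≤ v j * v j := fun j => mul_self_nonneg _
  exact Finset.single_le_sum (fun j _ => this j) (Finset.mem_univ i)

private lemma pn_two_pos {v : Fin n → ℝ} (hv : v ≠ 0) : 0 < pnorm 2 v :=
  pn_pos one_le_two hv

private lemma pn_two_zero : pnorm 2 (0 : Fin n → ℝ) = 0 := pn_zero one_le_two

end Aux

section Aux2

variable {d : ℕ}

private def ebasis (d : ℕ) (i : Fin d) : Fin d → ℝ := fun j => if i = j then 1 else 0

private lemma e_dot (i : Fin d) (y : Fin d → ℝ) : ebasis d i ⬝ᵥ y = y i := by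
  simp [ebasis, dotProduct, ite_mul]

private lemma mulVec_e (M : Matrix (Fin d) (Fin d) ℝ) (j : Fin d) :
    M *ᵥ ebasis d j = fun i => M i j := by
  funext i
  simp [ebasis, Matrix.mulVec, dotProduct, mul_ite]

private lemma quad_e (M : Matrix (Fin d) (Fin d) ℝ) (i j : Fin d) :
    ebasis d i ⬝ᵥ (M *ᵥ ebasis d j) = M i j := by
  rw [mulVec_e, e_dot]

private lemma quad_add (M : Matrix (Fin d) (Fin d) ℝ) (x y : Fin d → ℝ) :
    (x + y) ⬝ᵥ (M *ᵥ (x + y)) =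
      x ⬝ᵥ (M *ᵥ x) + x ⬝ᵥ (M *ᵥ y) + y ⬝ᵥ (M *ᵥ x) + y ⬝ᵥ (M *ᵥ y) := by
  rw [Matrix.mulVec_add, add_dotProduct, dotProduct_add, dotProduct_add]
  ring

private lemma quad_sub (M : Matrix (Fin d) (Fin d) ℝ) (x y : Fin d → ℝ) :
    (x - y) ⬝ᵥ (M *ᵥ (x - y)) =
      x ⬝ᵥ (M *ᵥ x) - x ⬝ᵥ (M *ᵥ y) - y ⬝ᵥ (M *ᵥ x) + y ⬝ᵥ (M *ᵥ y) := by
  rw [Matrix.mulVec_sub, sub_dotProduct, dotProduct_sub, dotProduct_sub]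
  ring

private lemma dot_symm (A : Matrix (Fin d) (Fin d) ℝ) (hA : Aᵀ = A) (x y : Fin d → ℝ) :
    x ⬝ᵥ (A *ᵥ y) = y ⬝ᵥ (A *ᵥ x) := by
  rw [Matrix.dotProduct_mulVec, ← Matrix.mulVec_transpose, hA, dotProduct_comm]

private lemma vmv_mulVec (a b x : Fin d → ℝ) :
    Matrix.vecMulVec a b *ᵥ x = (b ⬝ᵥ x) • a := by
  funext i
  simp only [Matrix.vecMulVec, Matrix.mulVec, dotProduct, Matrix.of_apply,
    Pi.smul_apply, smul_eq_mul, Finset.mul_sum]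
  rw [Finset.sum_mul]
  exact Finset.sum_congr rfl fun k _ => by ring

private lemma mul_vmv (A : Matrix (Fin d) (Fin d) ℝ) (a b : Fin d → ℝ) :
    A * Matrix.vecMulVec a b = Matrix.vecMulVec (A *ᵥ a) b := by
  ext i j
  simp only [Matrix.vecMulVec, Matrix.mul_apply, Matrix.mulVec, dotProduct,
    Matrix.of_apply, Finset.mul_sum]
  rw [Finset.sum_mul]
  exact Finset.sum_congr rfl fun k _ => by ring

private lemma smul_vmv (c : ℝ) (a b : Fin d → ℝ) :
    c • Matrix.vecMulVec a b = Matrix.vecMulVec (c • a) b := by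
  ext i j
  simp [Matrix.vecMulVec, mul_assoc]

private lemma vmv_transpose (a b : Fin d → ℝ) :
    (Matrix.vecMulVec a b)ᵀ = Matrix.vecMulVec b a := by
  ext i j
  simp [Matrix.vecMulVec, mul_comm]

private lemma det_one_add_vmv (a b : Fin d → ℝ) :
    ((1 : Matrix (Fin d) (Fin d) ℝ) + Matrix.vecMulVec a b).det = 1 + b ⬝ᵥ a := by
  rw [Matrix.vecMulVec_eq (Fin 1), Matrix.det_one_add_replicateCol_mul_replicateRow]

/-- Cauchy–Schwarz for a positive semidefinite bilinear form. -/
private lemma cs_ineq (A : Matrix (Fin d) (Fin d) ℝ) (hA : Aᵀ = A)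
    (hpsd : ∀ x, 0 ≤ x ⬝ᵥ (A *ᵥ x)) (u v w : Fin d → ℝ) (hw : A *ᵥ w = u)
    (hv : 0 < v ⬝ᵥ (A *ᵥ v)) :
    (u ⬝ᵥ v) ^ 2 ≤ (u ⬝ᵥ w) * (v ⬝ᵥ (A *ᵥ v)) := by
  set Qv := v ⬝ᵥ (A *ᵥ v) with hQv
  have h := hpsd (Qv • w - (u ⬝ᵥ v) • v)
  have hexp : (Qv • w - (u ⬝ᵥ v) • v) ⬝ᵥ (A *ᵥ (Qv • w - (u ⬝ᵥ v) • v)) =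
      Qv ^ 2 * (u ⬝ᵥ w) - 2 * Qv * (u ⬝ᵥ v) ^ 2 + (u ⬝ᵥ v) ^ 2 * Qv := by
    rw [quad_sub]
    have h1 : (Qv • w) ⬝ᵥ (A *ᵥ (Qv • w)) = Qv ^ 2 * (u ⬝ᵥ w) := by
      rw [Matrix.mulVec_smul, smul_dotProduct, dotProduct_smul, hw,
        dotProduct_comm w u, smul_eq_mul, smul_eq_mul]
      ring
    have h2 : (Qv • w) ⬝ᵥ (A *ᵥ ((u ⬝ᵥ v) • v)) = Qv * (u ⬝ᵥ v) ^ 2 := by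
      rw [Matrix.mulVec_smul, smul_dotProduct, dotProduct_smul,
        dot_symm A hA w v, hw, dotProduct_comm v u]
      rw [smul_eq_mul, smul_eq_mul]
      ring
    have h3 : ((u ⬝ᵥ v) • v) ⬝ᵥ (A *ᵥ (Qv • w)) = Qv * (u ⬝ᵥ v) ^ 2 := by
      rw [Matrix.mulVec_smul, smul_dotProduct, dotProduct_smul, hw,
        dotProduct_comm v u, smul_eq_mul, smul_eq_mul]
      ring
    have h4 : ((u ⬝ᵥ v) • v) ⬝ᵥ (A *ᵥ ((u ⬝ᵥ v) • v)) = (u ⬝ᵥ v) ^ 2 * Qv := by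
      rw [Matrix.mulVec_smul, smul_dotProduct, dotProduct_smul]
      rw [smul_eq_mul, smul_eq_mul]
      ring
    rw [h1, h2, h3, h4]
    ring
  rw [hexp] at h
  nlinarith [hv]

/-- The elementary inequality showing the perturbed determinant increases. -/
private lemma det_factor_gt {d : ℕ} (hd : 1 ≤ d) {q t : ℝ} (hq : (d : ℝ) < q) (ht0 : 0 < t)
    (ht1 : t ≤ 1 / 2) (ht2 : t * (((d : ℝ) - 1) * (q - 1) + 1) ≤ q - (d : ℝ)) :
    1 < (1 - t) ^ (d - 1) * (1 - t + t * q) := by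
  have hD1 : (1 : ℝ) ≤ (d : ℝ) := by exact_mod_cast hd
  have hcast : ((d - 1 : ℕ) : ℝ) = (d : ℝ) - 1 := by
    rw [Nat.cast_sub hd]; norm_num
  have hbern : 1 - ((d : ℝ) - 1) * t ≤ (1 - t) ^ (d - 1) := by
    have := one_add_mul_le_pow (a := -t) (by linarith) (d - 1)
    rw [hcast] at this
    calc 1 - ((d:ℝ) - 1) * t = 1 + ((d:ℝ) - 1) * (-t) := by ring
    _ ≤ (1 + -t) ^ (d - 1) := this
    _ = (1 - t) ^ (d - 1) := by rw [show (1:ℝ) + -t = 1 - t by ring]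
  have hpos : 0 < 1 - t + t * q := by nlinarith
  have hmul : (1 - ((d : ℝ) - 1) * t) * (1 - t + t * q) ≤ (1 - t) ^ (d - 1) * (1 - t + t * q) :=
    mul_le_mul_of_nonneg_right hbern hpos.le
  nlinarith [mul_pos ht0 ht0, mul_le_mul_of_nonneg_left ht2 ht0.le]

end Aux2

section Aux3

private lemma exists_dual {d : ℕ} (N : (Fin d → ℝ) → ℝ) (hcont : Continuous N)
    (hadd : ∀ x y, N (x + y) ≤ N x + N y) (hsmul : ∀ (c : ℝ) (x), N (c • x) = |c| * N x)
    (v : Fin d → ℝ) (hv : 0 < N v) :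
    ∃ u : Fin d → ℝ, u ⬝ᵥ v = N v ∧ ∀ x, |u ⬝ᵥ x| ≤ N x := by
  have hN0 : N 0 = 0 := by
    have := hsmul 0 0
    simpa using this
  have hNneg : ∀ x, 0 ≤ N x := by
    intro x
    have h1 : N (x + (-1 : ℝ) • x) ≤ N x + N ((-1 : ℝ) • x) := hadd _ _
    rw [hsmul] at h1
    simp at h1
    linarith [h1]
  have hNneg' : ∀ x, N (-x) = N x := by
    intro x
    have := hsmul (-1) x
    simpa using this
  -- the open convex sublevel set
  set s : Set (Fin d → ℝ) := {x | N x < N v} with hs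
  have hconv : Convex ℝ s := by
    intro x hx y hy a b ha hb hab
    simp only [hs, Set.mem_setOf_eq] at hx hy ⊢
    have h1 : N (a • x + b • y) ≤ a * N x + b * N y := by
      calc N (a • x + b • y) ≤ N (a • x) + N (b • y) := hadd _ _
      _ = a * N x + b * N y := by rw [hsmul, hsmul, abs_of_nonneg ha, abs_of_nonneg hb]
    set m := max (N x) (N y) with hm
    have hxm : N x ≤ m := le_max_left _ _
    have hym : N y ≤ m := le_max_right _ _
    have hmv : m < N v := max_lt hx hy
    have : a * N x + b * N y ≤ m := by
      calc a * N x + b * N y ≤ a * m + b * m := by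
            apply add_le_add (mul_le_mul_of_nonneg_left hxm ha)
              (mul_le_mul_of_nonneg_left hym hb)
      _ = m := by rw [← add_mul, hab, one_mul]
    linarith
  have hopen : IsOpen s := isOpen_lt hcont continuous_const
  have hvs : v ∉ s := by simp [hs]
  obtain ⟨f, hf⟩ := geometric_hahn_banach_open_point hconv hopen hvs
  have hfv : 0 < f v := by
    have h0 : (0 : Fin d → ℝ) ∈ s := by simpa [hs, hN0] using hv
    simpa using hf 0 h0
  have hkey : ∀ x, f x * N v ≤ f v * N x := by
    intro x
    rcases eq_or_lt_of_le (hNneg x) with h0 | hpos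
    · -- N x = 0
      rw [← h0, mul_zero]
      by_contra hcon
      push_neg at hcon
      have hfx : 0 < f x * N v := hcon
      have hfxpos : 0 < f x := by
        by_contra hfx0
        push_neg at hfx0
        nlinarith
      set c := (f v + 1) / f x with hc
      have hcs : N (c • x) < N v := by
        rw [hsmul, ← h0, mul_zero]; exact hv
      have := hf (c • x) hcs
      rw [_root_.map_smul, smul_eq_mul, hc, div_mul_cancel₀ _ (ne_of_gt hfxpos)] at this
      linarith
    · -- 0 < N x
      by_contra hcon
      push_neg at hcon
      set a := f x * N v with ha
      set b := f v * N x with hb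
      have hb0 : 0 < b := mul_pos hfv hpos
      have hba : b < a := hcon
      set τ := b / a with hτ
      have hτ0 : 0 < τ := div_pos hb0 (lt_trans hb0 hba)
      have hτ1 : τ < 1 := (div_lt_one (lt_trans hb0 hba)).mpr hba
      set y := (τ * N v / N x) • x with hy
      have hNy : N y < N v := by
        rw [hy, hsmul, abs_of_pos (by positivity)]
        rw [div_mul_eq_mul_div, mul_div_assoc, div_self (ne_of_gt hpos), mul_one]
        nlinarith
      have hfy := hf y hNy
      rw [hy, _root_.map_smul, smul_eq_mul] at hfy
      have h3 := mul_lt_mul_of_pos_right hfy hpos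
      rw [div_mul_eq_mul_div, div_mul_cancel₀ _ (ne_of_gt hpos)] at h3
      have ha0 : 0 < a := lt_trans hb0 hba
      have hfxpos : 0 < f x := by rw [ha] at ha0; nlinarith
      have hτa : τ * (N v * f x) = b := by
        rw [hτ, ha, div_mul_eq_mul_div, show f x * N v = N v * f x from mul_comm _ _,
          mul_div_assoc, div_self (by positivity), mul_one]
      nlinarith [hτa, h3]
  set u : Fin d → ℝ := (N v / f v) • fun i => f (ebasis d i) with hu
  have hfx : ∀ x : Fin d → ℝ, f x = ∑ i, x i * f (ebasis d i) := by
    intro x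
    conv_lhs => rw [pi_eq_sum_univ x]
    rw [_root_.map_sum]
    exact Finset.sum_congr rfl fun i _ => by rw [_root_.map_smul]; rfl
  have hudot : ∀ x, u ⬝ᵥ x = N v / f v * f x := by
    intro x
    rw [hfx x, Finset.mul_sum]
    simp only [hu, dotProduct, Pi.smul_apply, smul_eq_mul]
    exact Finset.sum_congr rfl fun i _ => by ring
  refine ⟨u, ?_, ?_⟩
  · rw [hudot, div_mul_cancel₀ _ (ne_of_gt hfv)]
  · intro x
    rw [abs_le]
    constructor
    · have h1 := hkey (-x)
      rw [_root_.map_neg, hNneg'] at h1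
      rw [hudot, div_mul_eq_mul_div, le_div_iff₀ hfv]
      nlinarith
    · have h1 := hkey x
      rw [hudot, div_mul_eq_mul_div, div_le_iff₀ hfv]
      nlinarith
end Aux3

section Aux4

private lemma quadM' {d : ℕ} (A : Matrix (Fin d) (Fin d) ℝ) (u x : Fin d → ℝ) (t : ℝ) :
    x ⬝ᵥ (((1 - t) • A + t • Matrix.vecMulVec u u) *ᵥ x) =
      (1 - t) * (x ⬝ᵥ (A *ᵥ x)) + t * (u ⬝ᵥ x) ^ 2 := by
  rw [Matrix.add_mulVec, dotProduct_add, Matrix.smul_mulVec,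
    Matrix.smul_mulVec, dotProduct_smul, dotProduct_smul, vmv_mulVec,
    dotProduct_smul, dotProduct_comm x u]
  simp only [smul_eq_mul]
  ring

end Aux4

set_option maxHeartbeats 1000000 in
/-- **Löwner–John step of the well-conditioned-basis construction.**
Let `Q` be an `n × d` real matrix of full column rank `d` and `p ∈ [1, ∞)`.  Then there is an
invertible `d × d` matrix `G` such that, with `U = Q * G⁻¹`, for all `z ∈ ℝᵈ` one has
`‖z‖₂ ≤ ‖U z‖_p ≤ √d · ‖z‖₂`. -/
theorem lowner_john_basis {n d : ℕ} (Q : Matrix (Fin n) (Fin d) ℝ) (p : ℝ)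
    (hp : 1 ≤ p) (hQ : Q.rank = d) :
    ∃ G : Matrix (Fin d) (Fin d) ℝ, IsUnit G ∧
      ∀ z : Fin d → ℝ,
        pnorm 2 z ≤ pnorm p ((Q * G⁻¹).mulVec z) ∧
        pnorm p ((Q * G⁻¹).mulVec z) ≤ Real.sqrt d * pnorm 2 z := by
  rcases Nat.eq_zero_or_pos d with hd0 | hd
  · subst hd0
    refine ⟨1, isUnit_one, fun z => ?_⟩
    have hz : z = 0 := Subsingleton.elim _ _
    have h1 : (Q * (1 : Matrix (Fin 0) (Fin 0) ℝ)⁻¹).mulVec z = 0 := by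
      rw [hz, Matrix.mulVec_zero]
    rw [h1, hz, pn_zero hp, pn_two_zero]
    norm_num
  -- injectivity of Q
  have hfr : Module.finrank ℝ (Fin d → ℝ) = d := by
    rw [Module.finrank_pi, Fintype.card_fin]
  have h1 := LinearMap.finrank_range_add_finrank_ker Q.mulVecLin
  rw [hfr] at h1
  have hkerfr : Module.finrank ℝ (LinearMap.ker Q.mulVecLin) = 0 := by
    have hrk : Q.rank = Module.finrank ℝ (LinearMap.range Q.mulVecLin) := rfl
    rw [← hrk, hQ] at h1
    omega
  have hker : LinearMap.ker Q.mulVecLin = ⊥ := Submodule.finrank_eq_zero.mp hkerfr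
  have hinj : ∀ z : Fin d → ℝ, Q *ᵥ z = 0 → z = 0 := by
    intro z hz
    have hmem : z ∈ LinearMap.ker Q.mulVecLin := by
      rw [LinearMap.mem_ker, Matrix.mulVecLin_apply]
      exact hz
    rw [hker, Submodule.mem_bot] at hmem
    exact hmem
  -- the norm N
  set N : (Fin d → ℝ) → ℝ := fun z => pnorm p (Q *ᵥ z) with hN
  have hNneg : ∀ x, 0 ≤ N x := fun x => pn_nonneg _ _
  have hN0 : N 0 = 0 := by
    rw [hN]
    simp only [Matrix.mulVec_zero]
    exact pn_zero hp
  have hNpos : ∀ x, x ≠ 0 → 0 < N x := fun x hx =>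
    pn_pos hp fun h => hx (hinj x h)
  have hNadd : ∀ x y, N (x + y) ≤ N x + N y := by
    intro x y
    simp only [hN, Matrix.mulVec_add]
    exact pn_add hp _ _
  have hNsmul : ∀ (c : ℝ) (x), N (c • x) = |c| * N x := by
    intro c x
    simp only [hN, Matrix.mulVec_smul]
    exact pn_smul hp _ _
  have hNcont : Continuous N :=
    (pn_cont hp).comp (continuous_const.matrix_mulVec continuous_id)
  -- upper equivalence constant
  set c₂ : ℝ := ∑ i, N (ebasis d i) with hc₂
  have hub : ∀ x, N x ≤ c₂ * pnorm 2 x := by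
    intro x
    have hx : x = ∑ i, x i • ebasis d i := by
      conv_lhs => rw [pi_eq_sum_univ x]
      rfl
    calc N x = N (∑ i, x i • ebasis d i) := by rw [← hx]
      _ ≤ ∑ i, N (x i • ebasis d i) := Finset.le_sum_of_subadditive N hN0.le hNadd _ _
      _ = ∑ i, |x i| * N (ebasis d i) := Finset.sum_congr rfl fun i _ => hNsmul _ _
      _ ≤ ∑ i, pnorm 2 x * N (ebasis d i) := Finset.sum_le_sum fun i _ =>
            mul_le_mul_of_nonneg_right (abs_le_pn_two x i) (hNneg _)
      _ = c₂ * pnorm 2 x := by rw [← Finset.mul_sum, ← hc₂, mul_comm]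
  -- unit basis vectors have euclidean norm one
  have hepn : ∀ i, pnorm 2 (ebasis d i) = 1 := by
    intro i
    rw [pn_two]
    have h2 : ebasis d i ⬝ᵥ ebasis d i = 1 := by
      rw [e_dot]
      simp [ebasis]
    rw [h2, Real.sqrt_one]
  -- lower equivalence constant via compactness of the sphere
  have hp2 : (1 : ℝ) ≤ 2 := one_le_two
  set S : Set (Fin d → ℝ) := {x | pnorm 2 x = 1} with hS
  have hSclosed : IsClosed S := isClosed_eq (pn_cont hp2) continuous_const
  have hSsub : S ⊆ Set.univ.pi fun _ : Fin d => Set.Icc (-1 : ℝ) 1 := by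
    intro x hx
    rw [Set.mem_univ_pi]
    intro i
    rw [Set.mem_Icc]
    have h3 := abs_le_pn_two x i
    rw [hS] at hx
    rw [Set.mem_setOf_eq] at hx
    rw [hx] at h3
    exact abs_le.mp h3
  have hScomp : IsCompact S :=
    IsCompact.of_isClosed_subset (isCompact_univ_pi fun _ => isCompact_Icc) hSclosed hSsub
  have hi0 : Nonempty (Fin d) := ⟨⟨0, hd⟩⟩
  obtain ⟨i0⟩ := hi0
  have hSne : S.Nonempty := ⟨ebasis d i0, hepn i0⟩
  obtain ⟨x₀, hx₀S, hx₀min⟩ := hScomp.exists_isMinOn hSne hNcont.continuousOn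
  set c₁ := N x₀ with hc₁
  have hx₀ne : x₀ ≠ 0 := by
    intro h
    rw [hS] at hx₀S
    rw [Set.mem_setOf_eq, h, pn_two_zero] at hx₀S
    norm_num at hx₀S
  have hc₁pos : 0 < c₁ := hNpos _ hx₀ne
  have hlb : ∀ x, c₁ * pnorm 2 x ≤ N x := by
    intro x
    rcases eq_or_ne x 0 with rfl | hx
    · rw [pn_two_zero, hN0, mul_zero]
    · have hr : 0 < pnorm 2 x := pn_two_pos hx
      have hy : ((pnorm 2 x)⁻¹ • x) ∈ S := by
        rw [hS, Set.mem_setOf_eq, pn_smul hp2, abs_of_pos (inv_pos.mpr hr),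
          inv_mul_cancel₀ (ne_of_gt hr)]
      have h1 : c₁ ≤ N ((pnorm 2 x)⁻¹ • x) := isMinOn_iff.mp hx₀min _ hy
      rw [hNsmul, abs_of_pos (inv_pos.mpr hr)] at h1
      have h4 : (pnorm 2 x)⁻¹ * pnorm 2 x = 1 := inv_mul_cancel₀ (ne_of_gt hr)
      nlinarith [mul_le_mul_of_nonneg_right h1 hr.le, h4, hr, hNneg x]
  -- the feasible set of quadratic forms
  set C : Set (Matrix (Fin d) (Fin d) ℝ) :=
    {M | Mᵀ = M ∧ (∀ x, 0 ≤ x ⬝ᵥ (M *ᵥ x)) ∧ ∀ x, x ⬝ᵥ (M *ᵥ x) ≤ N x ^ 2} with hC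
  have hCclosed : IsClosed C := by
    have h1 : IsClosed {M : Matrix (Fin d) (Fin d) ℝ | Mᵀ = M} :=
      isClosed_eq continuous_id.matrix_transpose continuous_id
    have h2 : IsClosed {M : Matrix (Fin d) (Fin d) ℝ | ∀ x, 0 ≤ x ⬝ᵥ (M *ᵥ x)} := by
      rw [Set.setOf_forall]
      exact isClosed_iInter fun x => isClosed_le continuous_const
        (continuous_const.dotProduct (continuous_id.matrix_mulVec continuous_const))
    have h3 : IsClosed {M : Matrix (Fin d) (Fin d) ℝ | ∀ x, x ⬝ᵥ (M *ᵥ x) ≤ N x ^ 2} := by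
      rw [Set.setOf_forall]
      exact isClosed_iInter fun x => isClosed_le
        (continuous_const.dotProduct (continuous_id.matrix_mulVec continuous_const))
        continuous_const
    have hCeq : C = {M : Matrix (Fin d) (Fin d) ℝ | Mᵀ = M} ∩
        ({M : Matrix (Fin d) (Fin d) ℝ | ∀ x, 0 ≤ x ⬝ᵥ (M *ᵥ x)} ∩
         {M : Matrix (Fin d) (Fin d) ℝ | ∀ x, x ⬝ᵥ (M *ᵥ x) ≤ N x ^ 2}) := by
      ext M
      simp only [hC, Set.mem_setOf_eq, Set.mem_inter_iff]
    rw [hCeq]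
    exact h1.inter (h2.inter h3)
  set K := c₂ ^ 2 with hK
  have hCsub : C ⊆ Set.univ.pi fun _ : Fin d =>
      Set.univ.pi fun _ : Fin d => Set.Icc (-K) K := by
    rintro M ⟨hsym, hpsd, hle⟩
    have hdiag : ∀ i, 0 ≤ M i i ∧ M i i ≤ K := by
      intro i
      have h0 := hpsd (ebasis d i)
      rw [quad_e] at h0
      have hle1 := hle (ebasis d i)
      rw [quad_e] at hle1
      have h2 : N (ebasis d i) ^ 2 ≤ K := by
        rw [hK]
        have h3 := hub (ebasis d i)
        rw [hepn i, mul_one] at h3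
        exact pow_le_pow_left₀ (hNneg _) h3 2
      exact ⟨h0, le_trans hle1 h2⟩
    refine Set.mem_univ_pi.mpr ?_
    intro i
    rw [Set.mem_univ_pi]
    intro j
    rw [Set.mem_Icc]
    have hsym' : M j i = M i j := by
      have h5 := congrFun (congrFun hsym i) j
      rw [Matrix.transpose_apply] at h5
      exact h5
    have hadd2 := hpsd (ebasis d i + ebasis d j)
    rw [quad_add, quad_e, quad_e, quad_e, quad_e] at hadd2
    have hsub2 := hpsd (ebasis d i - ebasis d j)
    rw [quad_sub, quad_e, quad_e, quad_e, quad_e] at hsub2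
    constructor <;> linarith [(hdiag i).1, (hdiag i).2, (hdiag j).1, (hdiag j).2]
  have hCcomp : IsCompact C :=
    IsCompact.of_isClosed_subset
      (isCompact_univ_pi fun _ => isCompact_univ_pi fun _ => isCompact_Icc) hCclosed hCsub
  -- the feasible set is nonempty
  have hdotself : ∀ x : Fin d → ℝ, 0 ≤ x ⬝ᵥ x := by
    intro x
    have : x ⬝ᵥ x = ∑ i, x i * x i := rfl
    rw [this]
    exact Finset.sum_nonneg fun i _ => mul_self_nonneg _
  have hM₀ : (c₁ ^ 2 • (1 : Matrix (Fin d) (Fin d) ℝ)) ∈ C := by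
    refine ⟨by rw [Matrix.transpose_smul, Matrix.transpose_one], ?_, ?_⟩
    · intro x
      rw [Matrix.smul_mulVec, Matrix.one_mulVec, dotProduct_smul, smul_eq_mul]
      exact mul_nonneg (sq_nonneg _) (hdotself x)
    · intro x
      rw [Matrix.smul_mulVec, Matrix.one_mulVec, dotProduct_smul, smul_eq_mul]
      have h6 : x ⬝ᵥ x = pnorm 2 x ^ 2 := by
        rw [pn_two, Real.sq_sqrt (hdotself x)]
      rw [h6]
      have h7 := hlb x
      nlinarith [mul_le_mul h7 h7 (mul_nonneg hc₁pos.le (pn_nonneg 2 x)) (hNneg x)]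
  -- maximize the determinant over C
  obtain ⟨A, hAC, hAmax⟩ := hCcomp.exists_isMaxOn ⟨_, hM₀⟩ continuous_id.matrix_det.continuousOn
  obtain ⟨hAsym, hApsd0, hAle⟩ := hAC
  have hdetA : 0 < A.det := by
    have h8 : (c₁ ^ 2 • (1 : Matrix (Fin d) (Fin d) ℝ)).det ≤ A.det := isMaxOn_iff.mp hAmax _ hM₀
    have h9 : (c₁ ^ 2 • (1 : Matrix (Fin d) (Fin d) ℝ)).det = (c₁ ^ 2) ^ d := by
      rw [Matrix.det_smul, Matrix.det_one, mul_one, Fintype.card_fin]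
    rw [h9] at h8
    have h10 : (0 : ℝ) < (c₁ ^ 2) ^ d := pow_pos (by positivity) d
    exact lt_of_lt_of_le h10 h8
  have hAunit : IsUnit A.det := isUnit_iff_ne_zero.mpr hdetA.ne'
  have hAherm : A.IsHermitian := by
    rw [Matrix.IsHermitian, Matrix.conjTranspose_eq_transpose_of_trivial, hAsym]
  have hApsd : A.PosSemidef := .of_dotProduct_mulVec_nonneg hAherm fun x => by simpa using hApsd0 x
  have hAquadpos : ∀ v : Fin d → ℝ, v ≠ 0 → 0 < v ⬝ᵥ (A *ᵥ v) := by
    intro v hv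
    rcases lt_or_eq_of_le (hApsd0 v) with h | h
    · exact h
    · exfalso
      have h0 : A *ᵥ v = 0 := by
        have h11 := (hApsd.dotProduct_mulVec_zero_iff v).mp (by simpa using h.symm)
        exact h11
      have hv0 : v = 0 := by
        have h12 : A⁻¹ *ᵥ (A *ᵥ v) = v := by
          rw [Matrix.mulVec_mulVec, Matrix.nonsing_inv_mul A hAunit, Matrix.one_mulVec]
        rw [h0, Matrix.mulVec_zero] at h12
        exact h12.symm
      exact hv hv0
  -- the key John-type inequality
  have hkey : ∀ x, N x ^ 2 ≤ (d : ℝ) * (x ⬝ᵥ (A *ᵥ x)) := by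
    by_contra hcon
    push_neg at hcon
    obtain ⟨v, hv⟩ := hcon
    have hvne : v ≠ 0 := by
      intro h
      rw [h, hN0, Matrix.mulVec_zero, dotProduct_zero, mul_zero] at hv
      norm_num at hv
    have hNv : 0 < N v := hNpos v hvne
    obtain ⟨u, huv, hud⟩ := exists_dual N hNcont hNadd hNsmul v hNv
    have hqv : 0 < v ⬝ᵥ (A *ᵥ v) := hAquadpos v hvne
    set w := A⁻¹ *ᵥ u with hw
    have hAw : A *ᵥ w = u := by
      rw [hw, Matrix.mulVec_mulVec, Matrix.mul_nonsing_inv A hAunit, Matrix.one_mulVec]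
    set q := u ⬝ᵥ w with hq
    have hcs := cs_ineq A hAsym hApsd0 u v w hAw hqv
    rw [huv] at hcs
    have hdq : (d : ℝ) < q := by
      have h13 : (d : ℝ) * (v ⬝ᵥ (A *ᵥ v)) < q * (v ⬝ᵥ (A *ᵥ v)) := lt_of_lt_of_le hv hcs
      exact (mul_lt_mul_iff_of_pos_right hqv).mp h13
    have hd1 : (1 : ℝ) ≤ (d : ℝ) := by exact_mod_cast hd
    set D := ((d : ℝ) - 1) * (q - 1) + 1 with hD
    have hDpos : 0 < D := by nlinarith
    set t := min (1 / 2 : ℝ) ((q - (d : ℝ)) / D) with ht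
    have ht0 : 0 < t := lt_min (by norm_num) (div_pos (by linarith) hDpos)
    have ht12 : t ≤ 1 / 2 := min_le_left _ _
    have ht2 : t * D ≤ q - (d : ℝ) := by
      have h14 : t ≤ (q - (d : ℝ)) / D := min_le_right _ _
      rw [le_div_iff₀ hDpos] at h14
      exact h14
    have h1t : 0 < 1 - t := by linarith
    set M' := (1 - t) • A + t • Matrix.vecMulVec u u with hM'
    have hM'C : M' ∈ C := by
      refine ⟨?_, ?_, ?_⟩
      · rw [hM', Matrix.transpose_add, Matrix.transpose_smul, Matrix.transpose_smul, hAsym,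
          vmv_transpose]
      · intro x
        rw [hM', quadM']
        exact add_nonneg (mul_nonneg h1t.le (hApsd0 x)) (mul_nonneg ht0.le (sq_nonneg _))
      · intro x
        rw [hM', quadM']
        have h15 := hAle x
        have h16 : (u ⬝ᵥ x) ^ 2 ≤ N x ^ 2 := by
          have h17 := abs_le.mp (hud x)
          exact sq_le_sq' h17.1 h17.2
        have h18 := mul_le_mul_of_nonneg_left h15 h1t.le
        have h19 := mul_le_mul_of_nonneg_left h16 ht0.le
        linarith
    have hdet1 : M' = A * ((1 - t) • (1 : Matrix (Fin d) (Fin d) ℝ) + t • Matrix.vecMulVec w u) := by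
      rw [Matrix.mul_add, Matrix.mul_smul, Matrix.mul_smul, Matrix.mul_one, mul_vmv, hAw, hM']
    have hdet2 : ((1 - t) • (1 : Matrix (Fin d) (Fin d) ℝ) + t • Matrix.vecMulVec w u) =
        (1 - t) • ((1 : Matrix (Fin d) (Fin d) ℝ) + Matrix.vecMulVec ((t / (1 - t)) • w) u) := by
      rw [smul_add, ← smul_vmv, smul_smul]
      congr 2
      field_simp
    have hdet3 : M'.det = A.det * ((1 - t) ^ d * (1 + t / (1 - t) * q)) := by
      rw [hdet1, Matrix.det_mul, hdet2, Matrix.det_smul, det_one_add_vmv, Fintype.card_fin,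
        dotProduct_smul, smul_eq_mul, ← hq]
    have hfac : 1 < (1 - t) ^ d * (1 + t / (1 - t) * q) := by
      have he : d = d - 1 + 1 := (Nat.succ_pred_eq_of_pos hd).symm
      have hpow : (1 - t) ^ d = (1 - t) ^ (d - 1) * (1 - t) := by
        conv_lhs => rw [he]
        rw [pow_succ]
      have hexp : (1 - t) ^ d * (1 + t / (1 - t) * q) = (1 - t) ^ (d - 1) * (1 - t + t * q) := by
        rw [hpow]
        field_simp
      rw [hexp]
      exact det_factor_gt hd hdq ht0 ht12 (by rw [hD] at ht2; linarith)
    have hcontra : M'.det ≤ A.det := isMaxOn_iff.mp hAmax _ hM'C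
    rw [hdet3] at hcontra
    have h20 := mul_lt_mul_of_pos_left hfac hdetA
    rw [mul_one] at h20
    linarith
  -- assemble the answer
  open scoped MatrixOrder in set G := CFC.sqrt A with hG
  have hGG : G * G = A := by open scoped MatrixOrder in exact CFC.sqrt_mul_sqrt_self A hApsd.nonneg
  have hGsym : Gᵀ = G := by
    open scoped MatrixOrder in have h18 := (CFC.sqrt_nonneg A).posSemidef.1
    rwa [Matrix.IsHermitian, Matrix.conjTranspose_eq_transpose_of_trivial] at h18
  have hGdet : IsUnit G.det := by
    have h19 : G.det * G.det = A.det := by rw [← Matrix.det_mul, hGG]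
    apply isUnit_iff_ne_zero.mpr
    intro h
    rw [h, mul_zero] at h19
    exact hdetA.ne' h19.symm
  refine ⟨G, (Matrix.isUnit_iff_isUnit_det G).mpr hGdet, ?_⟩
  intro z
  set y := G⁻¹ *ᵥ z with hy
  have hz : G *ᵥ y = z := by
    rw [hy, Matrix.mulVec_mulVec, Matrix.mul_nonsing_inv G hGdet, Matrix.one_mulVec]
  have hQG : (Q * G⁻¹).mulVec z = Q *ᵥ y := by
    rw [hy, Matrix.mulVec_mulVec]
  have hNy : pnorm p (Q *ᵥ y) = N y := rfl
  have hzz : z ⬝ᵥ z = y ⬝ᵥ (A *ᵥ y) := by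
    conv_lhs => rw [← hz]
    rw [Matrix.dotProduct_mulVec, ← Matrix.mulVec_transpose, hGsym, Matrix.mulVec_mulVec, hGG,
      dotProduct_comm]
  have hp2z : pnorm 2 z = Real.sqrt (y ⬝ᵥ (A *ᵥ y)) := by rw [pn_two, hzz]
  constructor
  · rw [hQG, hNy, hp2z]
    calc Real.sqrt (y ⬝ᵥ (A *ᵥ y)) ≤ Real.sqrt (N y ^ 2) := Real.sqrt_le_sqrt (hAle y)
      _ = N y := Real.sqrt_sq (hNneg y)
  · rw [hQG, hNy, hp2z]
    calc N y ≤ Real.sqrt ((d : ℝ) * (y ⬝ᵥ (A *ᵥ y))) := by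
          rw [← Real.sqrt_sq (hNneg y)]
          exact Real.sqrt_le_sqrt (hkey y)
      _ = Real.sqrt d * Real.sqrt (y ⬝ᵥ (A *ᵥ y)) := Real.sqrt_mul (Nat.cast_nonneg d) _
end

section
/- Let A be an n×d real matrix of rank d and p ∈ [1,∞). Suppose A = Uτ, where τ is an invertible d×d matrix and U is an n×d matrix whose columns form an Auerbach basis for the column space of A with respect to ‖·‖_p, i.e., ‖U^{(j)}‖_p = 1 for every column j, and for every ν ∈ ℝ^d with ‖Uν‖_p ≤ 1 one has |ν_j| ≤ 1 for all j. Then the columns of τ^{−1} form an exact barycentric spanner for D = {z ∈ ℝ^d : ‖Az‖_p ≤ 1}: every column of τ^{−1} belongs to D, and every z ∈ D can be written as z = τ^{−1}ν with ‖ν‖_∞ ≤ 1. -/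
open scoped BigOperators

/-- **Auerbach bases give exact barycentric spanners.**
Suppose `A = U * τ` with `τ` invertible, where `A` is an `n × d` matrix of rank `d`,
`p ∈ [1, ∞)`, and the columns of `U` form an Auerbach basis for the column space of `A`
w.r.t. `‖·‖_p` (each column has unit `p`-norm, and `‖U ν‖_p ≤ 1` implies `|ν_j| ≤ 1` for
all `j`).  Then the columns of `τ⁻¹` form an exact barycentric spanner for
`D = {z : ‖A z‖_p ≤ 1}`: every column of `τ⁻¹` lies in `D`, and every `z ∈ D` can be written
as `z = τ⁻¹ ν` with `‖ν‖_∞ ≤ 1`. -/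
theorem auerbach_exact_barycentric_spanner {n d : ℕ} (A : Matrix (Fin n) (Fin d) ℝ)
    (U : Matrix (Fin n) (Fin d) ℝ) (τ : Matrix (Fin d) (Fin d) ℝ) (p : ℝ)
    (hp : 1 ≤ p) (hrank : A.rank = d) (hA : A = U * τ) (hτ : IsUnit τ)
    (hUnit : ∀ j : Fin d, pnorm p (fun i => U i j) = 1)
    (hAuerbach : ∀ ν : Fin d → ℝ, pnorm p (U.mulVec ν) ≤ 1 → ∀ j, |ν j| ≤ 1) :
    (∀ j : Fin d, pnorm p (A.mulVec (fun i => τ⁻¹ i j)) ≤ 1) ∧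
    (∀ z : Fin d → ℝ, pnorm p (A.mulVec z) ≤ 1 →
      ∃ ν : Fin d → ℝ, z = τ⁻¹.mulVec ν ∧ ∀ j, |ν j| ≤ 1) := by
  have hdet : IsUnit τ.det := (Matrix.isUnit_iff_isUnit_det τ).mp hτ
  have hAz : ∀ z : Fin d → ℝ, A.mulVec z = U.mulVec (τ.mulVec z) := by
    intro z; rw [hA, ← Matrix.mulVec_mulVec]
  constructor
  · intro j
    have hcol : τ.mulVec (fun i => τ⁻¹ i j) = Pi.single j 1 := by
      funext i
      have : (τ * τ⁻¹) i j = (1 : Matrix (Fin d) (Fin d) ℝ) i j := by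
        rw [Matrix.mul_nonsing_inv τ hdet]
      simpa [Matrix.mul_apply, Matrix.mulVec, dotProduct, Matrix.one_apply,
        Pi.single_apply, eq_comm] using this
    have hU : U.mulVec (Pi.single j 1) = fun i => U i j := by
      funext i
      simp [Matrix.mulVec, dotProduct, Pi.single_apply]
    rw [hAz, hcol, hU, hUnit j]
  · intro z hz
    refine ⟨τ.mulVec z, ?_, ?_⟩
    · rw [Matrix.mulVec_mulVec, Matrix.nonsing_inv_mul τ hdet, Matrix.one_mulVec]
    · exact hAuerbach _ (by rw [← hAz]; exact hz)
end
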